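/- For every integer n ≥ 1, a(n) = (n+1)! − a(n+1, n+1). -/

import Mathlib

open scoped Classical

noncomputable section

/-- The element of `c` minimizing `key`, if `c` is nonempty. -/
def pickMin {n : ℕ} {α : Type*} [LinearOrder α] (key : Fin n → α)
    (c : Finset (Fin n)) : Option (Fin n) :=
  if h : c.Nonempty then some (Classical.choose (Finset.exists_min_image c key h)) else none

/-- The set of matched `V`-vertices after the first `j` arrivals of the online greedy
process on the bipartite graph with `U`-side arrival order `u_0, u_1, …` and adjacency
`adj`, in which each arriving `u_j` is matched to its currently unmatched neighbor
minimizing `key` (if any). -/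
def greedyRun {n : ℕ} {α : Type*} [LinearOrder α] (adj : ℕ → Fin n → Prop)
    (key : Fin n → α) : ℕ → Finset (Fin n)
  | 0 => ∅
  | j + 1 =>
    match pickMin key ((Finset.univ.filter fun i => adj j i) \ greedyRun adj key j) with
    | some v => insert v (greedyRun adj key j)
    | none => greedyRun adj key j

/-- The `V`-vertex that the arriving vertex `u_j` (0-indexed) gets matched to, if any. -/
def greedyMatchU {n : ℕ} {α : Type*} [LinearOrder α] (adj : ℕ → Fin n → Prop)
    (key : Fin n → α) (j : ℕ) : Option (Fin n) :=
  pickMin key ((Finset.univ.filter fun i => adj j i) \ greedyRun adj key j)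

/-- Adjacency of the monotone graph `MonotoneG` (0-indexed):
`u_j` is adjacent to `v_i` iff `j ≤ i`. -/
def monoAdj (n : ℕ) : ℕ → Fin n → Prop := fun j i => j ≤ (i : ℕ)

/-- The set of matched `V`-vertices produced by the Ranking greedy process on `MonotoneG`
with permutation `π` (where `π i` is the rank of `v_i`, 0-indexed). -/
def rankMatched (n : ℕ) (π : Equiv.Perm (Fin n)) : Finset (Fin n) :=
  greedyRun (monoAdj n) (fun i => π i) n

/-- `x(π)`: the number of edges of the matching produced by Ranking on `MonotoneG`. -/
def xSize (n : ℕ) (π : Equiv.Perm (Fin n)) : ℕ := (rankMatched n π).card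

/-- `a(n) = Σ_π x(π)`, over all `n!` permutations. -/
def aVal (n : ℕ) : ℕ := ∑ π : Equiv.Perm (Fin n), xSize n π

/-- `a(n,i)` (with `i` 1-indexed): the number of permutations `π` of `{1,…,n}` for which
the vertex of rank `i` under `π` is matched by the Ranking greedy process on `MonotoneG`. -/
def aIdx (n i : ℕ) : ℕ :=
  (Finset.univ.filter fun π : Equiv.Perm (Fin n) =>
    ∃ v : Fin n, (π v : ℕ) = i - 1 ∧ v ∈ rankMatched n π).card

/-- `d(m,i)` (with `i` 1-indexed): the number of permutations of `{1,…,m}` all of whose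
fixed points (if any) lie among the first `i` items. -/
def dIdx (m i : ℕ) : ℕ :=
  (Finset.univ.filter fun σ : Equiv.Perm (Fin m) => ∀ x, σ x = x → (x : ℕ) < i).card

/-- `d(m)`: the number of derangements of `{1,…,m}`. -/
def numDer (m : ℕ) : ℕ :=
  (Finset.univ.filter fun σ : Equiv.Perm (Fin m) => ∀ x, σ x ≠ x).card

/-- The key for the greedy-by-price process: buy the cheapest available item,
breaking ties in favor of the smaller index. -/
def priceKey {n : ℕ} (p : Fin n → ℝ) : Fin n → Lex (ℝ × ℕ) := fun i => toLex (p i, (i : ℕ))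

/-- The utility `y(u_j)` of buyer `u_j` (0-indexed) in the greedy-by-price process:
`1 - p v` if `u_j` buys item `v`, and `0` if `u_j` remains unmatched. -/
def utility (n : ℕ) (adj : ℕ → Fin n → Prop) (p : Fin n → ℝ) (j : ℕ) : ℝ :=
  (greedyMatchU adj (priceKey p) j).elim 0 (fun v => 1 - p v)

/-- The revenue `r(v)` from item `v` in the greedy-by-price process:
`p v` if `v` is sold, and `0` otherwise. -/
def revenue (n : ℕ) (adj : ℕ → Fin n → Prop) (p : Fin n → ℝ) (v : Fin n) : ℝ :=
  if v ∈ greedyRun adj (priceKey p) n then p v else 0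

/-- The `m`-th harmonic number `H_m = Σ_{i=1}^m 1/i` (with `H_0 = 0`). -/
def harm (m : ℕ) : ℝ := ∑ i ∈ Finset.range m, (1 : ℝ) / (i + 1)

section AuxLemmas

open Finset

variable {n : ℕ} {α : Type*} [LinearOrder α]

lemma pickMin_spec {key : Fin n → α} {c : Finset (Fin n)} {v : Fin n}
    (h : pickMin key c = some v) : v ∈ c ∧ ∀ w ∈ c, key v ≤ key w := by
  unfold pickMin at h
  split_ifs at h with hc
  obtain ⟨hm, hmin⟩ := Classical.choose_spec (Finset.exists_min_image c key hc)
  cases h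
  exact ⟨hm, hmin⟩

lemma pickMin_of_nonempty {key : Fin n → α} {c : Finset (Fin n)} (hc : c.Nonempty) :
    ∃ v, pickMin key c = some v := by
  unfold pickMin
  rw [dif_pos hc]
  exact ⟨_, rfl⟩

lemma pickMin_eq_some {key : Fin n → α} {c : Finset (Fin n)} {v : Fin n}
    (hv : v ∈ c) (hmin : ∀ w ∈ c, w ≠ v → key v < key w) : pickMin key c = some v := by
  obtain ⟨u, hu⟩ := pickMin_of_nonempty (key := key) ⟨v, hv⟩
  obtain ⟨hum, humin⟩ := pickMin_spec hu
  rw [hu]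
  by_cases huv : u = v
  · rw [huv]
  · exact absurd (humin v hv) (not_le.mpr (hmin u hum huv))

lemma pickMin_singleton (key : Fin n → α) (v : Fin n) : pickMin key {v} = some v :=
  pickMin_eq_some (mem_singleton_self v)
    (fun w hw hne => absurd (mem_singleton.mp hw) hne)

lemma greedyRun_succ_some {adj : ℕ → Fin n → Prop} {key : Fin n → α} {j : ℕ} {v : Fin n}
    (h : pickMin key ((Finset.univ.filter fun i => adj j i) \ greedyRun adj key j) = some v) :
    greedyRun adj key (j + 1) = insert v (greedyRun adj key j) := by
  rw [greedyRun, h]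

lemma greedyRun_succ_none {adj : ℕ → Fin n → Prop} {key : Fin n → α} {j : ℕ}
    (h : pickMin key ((Finset.univ.filter fun i => adj j i) \ greedyRun adj key j) = none) :
    greedyRun adj key (j + 1) = greedyRun adj key j := by
  rw [greedyRun, h]

lemma greedyRun_step_cases (adj : ℕ → Fin n → Prop) (key : Fin n → α) (j : ℕ) :
    greedyRun adj key (j+1) = greedyRun adj key j ∨
      ∃ v, v ∈ (Finset.univ.filter fun i => adj j i) \ greedyRun adj key j ∧
        greedyRun adj key (j+1) = insert v (greedyRun adj key j) := by
  cases h : pickMin key ((Finset.univ.filter fun i => adj j i) \ greedyRun adj key j) with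
  | none => exact Or.inl (greedyRun_succ_none h)
  | some v => exact Or.inr ⟨v, (pickMin_spec h).1, greedyRun_succ_some h⟩

lemma greedyRun_subset_succ (adj : ℕ → Fin n → Prop) (key : Fin n → α) (j : ℕ) :
    greedyRun adj key j ⊆ greedyRun adj key (j+1) := by
  rcases greedyRun_step_cases adj key j with h | ⟨v, _, h⟩
  · rw [h]
  · rw [h]; exact subset_insert _ _

lemma greedyRun_mono (adj : ℕ → Fin n → Prop) (key : Fin n → α) {j j' : ℕ} (h : j ≤ j') :
    greedyRun adj key j ⊆ greedyRun adj key j' := by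
  induction j' with
  | zero => simp_all
  | succ k ih =>
    rcases Nat.lt_or_ge j (k+1) with hk | hk
    · exact (ih (by omega)).trans (greedyRun_subset_succ adj key k)
    · have hjk : j = k + 1 := by omega
      subst hjk; exact subset_rfl

lemma succAbove_val_cases (p : Fin (n+1)) (k : Fin n) :
    ((p.succAbove k : Fin (n+1)) : ℕ) = (k:ℕ) ∧ (k:ℕ) < (p:ℕ) ∨
    ((p.succAbove k : Fin (n+1)) : ℕ) = (k:ℕ)+1 ∧ (p:ℕ) ≤ (k:ℕ) := by
  rcases lt_or_ge ((k:ℕ)) ((p:ℕ)) with h | h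
  · left
    refine ⟨?_, h⟩
    rw [Fin.succAbove_of_castSucc_lt _ _ (by simpa [Fin.lt_def] using h)]
    simp
  · right
    refine ⟨?_, h⟩
    rw [Fin.succAbove_of_le_castSucc _ _ (by simpa [Fin.le_def] using h)]
    simp

lemma not_mem_map_succAboveEmb (p : Fin (n+1)) (s : Finset (Fin n)) :
    p ∉ s.map p.succAboveEmb := by
  simp only [Finset.mem_map, Fin.succAboveEmb_apply]
  rintro ⟨k, _, hk⟩
  exact Fin.succAbove_ne p k hk

lemma finsetMap_sdiff (f : Fin n ↪ Fin (n+1)) (s t : Finset (Fin n)) :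
    (s \ t).map f = s.map f \ t.map f := by
  ext x
  simp only [Finset.mem_sdiff, Finset.mem_map]
  constructor
  · rintro ⟨k, ⟨hks, hkt⟩, rfl⟩
    refine ⟨⟨k, hks, rfl⟩, ?_⟩
    rintro ⟨k', hk', he⟩
    exact hkt (f.injective he ▸ hk')
  · rintro ⟨⟨k, hks, rfl⟩, hnt⟩
    exact ⟨k, ⟨hks, fun hkt => hnt ⟨k, hkt, rfl⟩⟩, rfl⟩

lemma filter_monoAdj_succ (p : Fin (n+1)) {j : ℕ} (hj : j ≤ (p:ℕ)) :
    (Finset.univ.filter fun i : Fin (n+1) => monoAdj (n+1) j i) =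
      insert p ((Finset.univ.filter fun k : Fin n => monoAdj n j k).map p.succAboveEmb) := by
  ext i
  simp only [Finset.mem_filter, Finset.mem_univ, true_and, Finset.mem_insert, Finset.mem_map,
    Fin.succAboveEmb_apply, monoAdj.eq_1]
  constructor
  · intro hji
    by_cases hip : i = p
    · exact Or.inl hip
    · obtain ⟨k, hk⟩ := Fin.exists_succAbove_eq hip
      right
      refine ⟨k, ?_, hk⟩
      have hv := succAbove_val_cases p k
      rw [← hk] at hji
      omega
  · rintro (rfl | ⟨k, hk, rfl⟩)
    · exact hj
    · have hv := succAbove_val_cases p k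
      omega

end AuxLemmas

section PiRun

open Finset

variable {n : ℕ}

lemma stop_exists (π : Equiv.Perm (Fin n)) :
    ∃ j, (Finset.univ.filter fun i : Fin n => monoAdj n j i) ⊆
      greedyRun (monoAdj n) (fun i => π i) j := by
  refine ⟨n, fun i hi => ?_⟩
  simp only [Finset.mem_filter, monoAdj.eq_1] at hi
  have := i.isLt
  omega

/-- The first step at which the π-run stalls. -/
def stopIdx (π : Equiv.Perm (Fin n)) : ℕ := Nat.find (stop_exists π)

lemma stop_le (π : Equiv.Perm (Fin n)) : stopIdx π ≤ n := by
  apply Nat.find_le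
  intro i hi
  simp only [Finset.mem_filter, monoAdj.eq_1] at hi
  have := i.isLt
  omega

lemma stop_spec (π : Equiv.Perm (Fin n)) :
    (Finset.univ.filter fun i : Fin n => monoAdj n (stopIdx π) i) ⊆
      greedyRun (monoAdj n) (fun i => π i) (stopIdx π) := Nat.find_spec (stop_exists π)

lemma lt_stop (π : Equiv.Perm (Fin n)) {j : ℕ} (h : j < stopIdx π) :
    ((Finset.univ.filter fun i : Fin n => monoAdj n j i) \
      greedyRun (monoAdj n) (fun i => π i) j).Nonempty :=
  Finset.sdiff_nonempty.mpr (Nat.find_min (stop_exists π) h)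

lemma pickMin_empty {α : Type*} [LinearOrder α] (key : Fin n → α) :
    pickMin key (∅ : Finset (Fin n)) = none := by
  unfold pickMin
  rw [dif_neg (by simp)]

lemma stall (π : Equiv.Perm (Fin n)) {j : ℕ} (h : stopIdx π ≤ j) :
    greedyRun (monoAdj n) (fun i => π i) j = greedyRun (monoAdj n) (fun i => π i) (stopIdx π) := by
  induction j with
  | zero =>
    have h0 : stopIdx π = 0 := by omega
    rw [h0]
  | succ k ih =>
    rcases Nat.lt_or_ge k (stopIdx π) with hk | hk
    · have hk1 : stopIdx π = k + 1 := by omega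
      rw [hk1]
    · have hR := ih hk
      have hempty : (Finset.univ.filter fun i : Fin n => monoAdj n k i) \
          greedyRun (monoAdj n) (fun i => π i) k = ∅ := by
        rw [Finset.sdiff_eq_empty_iff_subset, hR]
        intro i hi
        apply stop_spec π
        simp only [Finset.mem_filter, Finset.mem_univ, true_and, monoAdj.eq_1] at hi ⊢
        omega
      rw [greedyRun_succ_none (by rw [hempty]; exact pickMin_empty _), hR]

lemma card_run (π : Equiv.Perm (Fin n)) {j : ℕ} (h : j ≤ stopIdx π) :
    (greedyRun (monoAdj n) (fun i => π i) j).card = j := by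
  induction j with
  | zero => simp [greedyRun]
  | succ k ih =>
    have hk : k < stopIdx π := by omega
    obtain ⟨v, hv⟩ := pickMin_of_nonempty (key := fun i => π i) (lt_stop π hk)
    have hmem := (pickMin_spec hv).1
    rw [greedyRun_succ_some hv,
      Finset.card_insert_of_notMem (Finset.mem_sdiff.mp hmem).2, ih (by omega)]

lemma xSize_eq_stop (π : Equiv.Perm (Fin n)) : xSize n π = stopIdx π := by
  unfold xSize rankMatched
  rw [stall π (stop_le π)]
  exact card_run π le_rfl

lemma xSize_le (π : Equiv.Perm (Fin n)) : xSize n π ≤ n :=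
  (xSize_eq_stop π) ▸ stop_le π

end PiRun

section InsPerm

open Finset

variable {n : ℕ}

/-- Insert a new top-ranked vertex at position `p`. -/
def insPerm (π : Equiv.Perm (Fin n)) (p : Fin (n+1)) : Equiv.Perm (Fin (n+1)) :=
  ((finSuccEquiv' p).trans (Equiv.optionCongr π)).trans (finSuccEquiv' (Fin.last n)).symm

lemma insPerm_apply_self (π : Equiv.Perm (Fin n)) (p : Fin (n+1)) :
    insPerm π p p = Fin.last n := by
  simp [insPerm, finSuccEquiv'_at, finSuccEquiv'_symm_none]

lemma insPerm_apply_succAbove (π : Equiv.Perm (Fin n)) (p : Fin (n+1)) (k : Fin n) :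
    insPerm π p (p.succAbove k) = (π k).castSucc := by
  simp [insPerm, finSuccEquiv'_succAbove, finSuccEquiv'_symm_some, Fin.succAbove_last]

lemma insPerm_injective :
    Function.Injective (fun x : Equiv.Perm (Fin n) × Fin (n+1) => insPerm x.1 x.2) := by
  rintro ⟨π, p⟩ ⟨π', p'⟩ h
  simp only at h
  have hp : p = p' := by
    apply (insPerm π p).injective
    rw [insPerm_apply_self, h, insPerm_apply_self]
  subst hp
  have hπ : π = π' := by
    apply Equiv.ext
    intro k
    have hcs : (π k).castSucc = (π' k).castSucc := by
      rw [← insPerm_apply_succAbove π p k, h, insPerm_apply_succAbove]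
    exact Fin.castSucc_injective n hcs
  rw [hπ]

lemma insPerm_bijective :
    Function.Bijective (fun x : Equiv.Perm (Fin n) × Fin (n+1) => insPerm x.1 x.2) := by
  rw [Fintype.bijective_iff_injective_and_card]
  refine ⟨insPerm_injective, ?_⟩
  simp only [Fintype.card_prod, Fintype.card_perm, Fintype.card_fin]
  rw [Nat.factorial_succ, Nat.mul_comm]

lemma mem_rankMatched_insPerm (π : Equiv.Perm (Fin n)) (p : Fin (n+1)) :
    p ∈ rankMatched (n+1) (insPerm π p) ↔ xSize n π ≤ (p:ℕ) := by
  set m := stopIdx π with hm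
  have hface : ∀ j, j ≤ (p:ℕ) + 1 → j ≤ m →
      greedyRun (monoAdj (n+1)) (fun i => insPerm π p i) j =
        (greedyRun (monoAdj n) (fun i => π i) j).map p.succAboveEmb := by
    intro j
    induction j with
    | zero => intro _ _; simp [greedyRun]
    | succ k ih =>
      intro hk1 hk2
      have hkp : k ≤ (p:ℕ) := by omega
      have hkm : k < m := by omega
      have hS := ih (by omega) (by omega)
      obtain ⟨u, hu⟩ := pickMin_of_nonempty (key := fun i => π i) (lt_stop π hkm)
      obtain ⟨huB, humin⟩ := pickMin_spec hu
      have hA' : (Finset.univ.filter fun i : Fin (n+1) => monoAdj (n+1) k i) \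
          greedyRun (monoAdj (n+1)) (fun i => insPerm π p i) k =
          insert p (((Finset.univ.filter fun i : Fin n => monoAdj n k i) \
            greedyRun (monoAdj n) (fun i => π i) k).map p.succAboveEmb) := by
        rw [hS, filter_monoAdj_succ p hkp, finsetMap_sdiff,
          Finset.insert_sdiff_of_notMem _ (not_mem_map_succAboveEmb p _)]
      have hpick : pickMin (fun i => insPerm π p i)
          ((Finset.univ.filter fun i : Fin (n+1) => monoAdj (n+1) k i) \
            greedyRun (monoAdj (n+1)) (fun i => insPerm π p i) k) = some (p.succAbove u) := by
        rw [hA']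
        apply pickMin_eq_some
        · exact Finset.mem_insert_of_mem (Finset.mem_map_of_mem _ huB)
        · intro w hw hne
          rcases Finset.mem_insert.mp hw with rfl | hw'
          · rw [insPerm_apply_self, insPerm_apply_succAbove]
            exact Fin.castSucc_lt_last _
          · obtain ⟨k', hk'B, rfl⟩ := Finset.mem_map.mp hw'
            simp only [Fin.succAboveEmb_apply] at hne ⊢
            have hne' : k' ≠ u := by
              intro he
              exact hne (by rw [he])
            have hlt : π u < π k' :=
              lt_of_le_of_ne (humin k' hk'B) (fun he => hne' (π.injective he.symm))
            rw [insPerm_apply_succAbove, insPerm_apply_succAbove]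
            exact Fin.castSucc_lt_castSucc_iff.mpr hlt
      rw [greedyRun_succ_some hpick, greedyRun_succ_some hu, hS, Finset.map_insert]
      simp [Fin.succAboveEmb_apply]
  rw [xSize_eq_stop π, ← hm]
  by_cases hpm : m ≤ (p:ℕ)
  · simp only [hpm, iff_true]
    have hSm := hface m (by omega) le_rfl
    have hA' : (Finset.univ.filter fun i : Fin (n+1) => monoAdj (n+1) m i) \
        greedyRun (monoAdj (n+1)) (fun i => insPerm π p i) m = {p} := by
      rw [hSm, filter_monoAdj_succ p hpm,
        Finset.insert_sdiff_of_notMem _ (not_mem_map_succAboveEmb p _),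
        ← finsetMap_sdiff, Finset.sdiff_eq_empty_iff_subset.mpr (stop_spec π),
        Finset.map_empty]
      rfl
    have hpick : pickMin (fun i => insPerm π p i)
        ((Finset.univ.filter fun i : Fin (n+1) => monoAdj (n+1) m i) \
          greedyRun (monoAdj (n+1)) (fun i => insPerm π p i) m) = some p := by
      rw [hA']
      exact pickMin_singleton _ _
    have hmem : p ∈ greedyRun (monoAdj (n+1)) (fun i => insPerm π p i) (m+1) := by
      rw [greedyRun_succ_some hpick]
      exact Finset.mem_insert_self _ _
    exact greedyRun_mono (monoAdj (n+1)) (fun i => insPerm π p i)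
      (by have := stop_le π; omega) hmem
  · simp only [hpm, iff_false]
    have hnot : ∀ j, j ≤ n + 1 →
        p ∉ greedyRun (monoAdj (n+1)) (fun i => insPerm π p i) j := by
      intro j
      induction j with
      | zero => intro _; simp [greedyRun]
      | succ k ih =>
        intro hk
        rcases Nat.lt_or_ge k ((p:ℕ)+1) with hlt | hge
        · have hface' := hface (k+1) (by omega) (by omega)
          rw [hface']
          exact not_mem_map_succAboveEmb p _
        · intro hmem
          rcases greedyRun_step_cases (monoAdj (n+1)) (fun i => insPerm π p i) k with
            he | ⟨v, hv, he⟩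
          · rw [he] at hmem
            exact ih (by omega) hmem
          · rw [he] at hmem
            rcases Finset.mem_insert.mp hmem with rfl | h2
            · have hvf := (Finset.mem_sdiff.mp hv).1
              simp only [Finset.mem_filter, monoAdj.eq_1] at hvf
              omega
            · exact ih (by omega) h2
    exact hnot (n+1) le_rfl

end InsPerm


section CountLt

lemma card_filter_coe_lt {n x : ℕ} (hx : x ≤ n+1) :
    (Finset.univ.filter fun p : Fin (n+1) => (p:ℕ) < x).card = x := by
  have himg : (Finset.univ.filter fun p : Fin (n+1) => (p:ℕ) < x).image Fin.val
      = Finset.range x := by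
    ext a
    simp only [Finset.mem_image, Finset.mem_filter, Finset.mem_univ, true_and, Finset.mem_range]
    constructor
    · rintro ⟨q, hq, rfl⟩; exact hq
    · intro ha; exact ⟨⟨a, by omega⟩, ha, rfl⟩
  calc (Finset.univ.filter fun p : Fin (n+1) => (p:ℕ) < x).card
      = ((Finset.univ.filter fun p : Fin (n+1) => (p:ℕ) < x).image Fin.val).card :=
        (Finset.card_image_of_injective _ Fin.val_injective).symm
    _ = (Finset.range x).card := by rw [himg]
    _ = x := Finset.card_range x

end CountLt

/-- For every integer `n ≥ 1`, `a(n) = (n+1)! − a(n+1, n+1)`. -/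
theorem stmt_7 (n : ℕ) (hn : 1 ≤ n) :
    (aVal n : ℤ) = (Nat.factorial (n + 1) : ℤ) - aIdx (n + 1) (n + 1) := by
  have key : aVal n + aIdx (n+1) (n+1) = Nat.factorial (n+1) := by
    have hQ : ∀ τ : Equiv.Perm (Fin (n+1)),
        (∃ v, ((τ v : ℕ) = (n+1) - 1 ∧ v ∈ rankMatched (n+1) τ)) ↔
          τ.symm (Fin.last n) ∈ rankMatched (n+1) τ := by
      intro τ
      constructor
      · rintro ⟨v, hv1, hv2⟩
        have hlast : τ v = Fin.last n := by
          apply Fin.ext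
          simpa using hv1
        rw [← hlast, Equiv.symm_apply_apply]
        exact hv2
      · intro h
        exact ⟨τ.symm (Fin.last n), by simp, h⟩
    have hsplit := Finset.card_filter_add_card_filter_not
      (s := (Finset.univ : Finset (Equiv.Perm (Fin (n+1)))))
      (p := fun τ => ∃ v, ((τ v : ℕ) = (n+1) - 1 ∧ v ∈ rankMatched (n+1) τ))
    have hcardU : (Finset.univ : Finset (Equiv.Perm (Fin (n+1)))).card
        = Nat.factorial (n+1) := by
      simp [Finset.card_univ, Fintype.card_perm, Fintype.card_fin]
    have haidx : aIdx (n+1) (n+1) = (Finset.univ.filter fun τ : Equiv.Perm (Fin (n+1)) =>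
        ∃ v, ((τ v : ℕ) = (n+1) - 1 ∧ v ∈ rankMatched (n+1) τ)).card := rfl
    have hstep1 : (Finset.univ.filter fun τ : Equiv.Perm (Fin (n+1)) =>
        ¬ ∃ v, ((τ v : ℕ) = (n+1) - 1 ∧ v ∈ rankMatched (n+1) τ)).card =
        (Finset.univ.filter fun x : Equiv.Perm (Fin n) × Fin (n+1) =>
          ((x.2:ℕ) < xSize n x.1)).card := by
      symm
      apply Finset.card_equiv (Equiv.ofBijective _ insPerm_bijective)
      intro x
      simp only [Finset.mem_filter, Finset.mem_univ, true_and, Equiv.ofBijective_apply]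
      rw [hQ]
      have hsymm : (insPerm x.1 x.2).symm (Fin.last n) = x.2 := by
        rw [Equiv.symm_apply_eq]
        exact (insPerm_apply_self x.1 x.2).symm
      rw [hsymm, mem_rankMatched_insPerm]
      omega
    have hstep2 : (Finset.univ.filter fun x : Equiv.Perm (Fin n) × Fin (n+1) =>
        ((x.2:ℕ) < xSize n x.1)).card = ∑ π : Equiv.Perm (Fin n), xSize n π := by
      rw [Finset.card_eq_sum_card_fiberwise
        (f := Prod.fst) (t := Finset.univ) (fun x _ => Finset.mem_univ _)]
      apply Finset.sum_congr rfl
      intro π _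
      have hbij : ((Finset.univ.filter fun x : Equiv.Perm (Fin n) × Fin (n+1) =>
          ((x.2:ℕ) < xSize n x.1)).filter fun x => x.1 = π).card =
          (Finset.univ.filter fun q : Fin (n+1) => (q:ℕ) < xSize n π).card := by
        apply Finset.card_bij (fun x _ => x.2)
        · intro a ha
          simp only [Finset.mem_filter, Finset.mem_univ, true_and] at ha ⊢
          rw [← ha.2]
          exact ha.1
        · intro a ha b hb hab
          simp only [Finset.mem_filter, Finset.mem_univ, true_and] at ha hb
          exact Prod.ext (ha.2.trans hb.2.symm) hab
        · intro q hq
          simp only [Finset.mem_filter, Finset.mem_univ, true_and] at hq ⊢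
          exact ⟨(π, q), ⟨hq, rfl⟩, rfl⟩
      rw [hbij]
      exact card_filter_coe_lt ((xSize_le π).trans (by omega))
    have hval : aVal n = (Finset.univ.filter fun τ : Equiv.Perm (Fin (n+1)) =>
        ¬ ∃ v, ((τ v : ℕ) = (n+1) - 1 ∧ v ∈ rankMatched (n+1) τ)).card :=
      (hstep1.trans hstep2).symm
    omega
  rw [eq_sub_iff_add_eq]
  exact_mod_cast key

end
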